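/- Let X be a real random variable with E[X⁴] < ∞, mean μ = E[X], variance σ², and suppose E[(X-μ)⁴] ≤ C₄σ⁴. Let A be an event with P(A) = 1 - γ ≥ 1/2. Then |E[X | A] - E[X]| ≤ σ (8 C₄ γ³)^{1/4}. -/

import Mathlib

open MeasureTheory ProbabilityTheory

lemma cs_aux {Ω : Type*} [MeasurableSpace Ω] (ν : Measure Ω) [IsFiniteMeasure ν] {f : Ω → ℝ}
    (hf : Integrable f ν) (hf2 : Integrable (fun ω => f ω ^ 2) ν) :
    (∫ ω, f ω ∂ν) ^ 2 ≤ (ν Set.univ).toReal * ∫ ω, f ω ^ 2 ∂ν := by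
  by_cases h0 : ν = 0
  · simp [h0]
  · have hMpos : 0 < (ν Set.univ).toReal :=
      ENNReal.toReal_pos (by simpa [Measure.measure_univ_eq_zero] using h0) (measure_ne_top ν _)
    set M := (ν Set.univ).toReal with hM
    set S := ∫ ω, f ω ∂ν with hS
    have hpos : 0 ≤ ∫ ω, (M * f ω - S) ^ 2 ∂ν := integral_nonneg fun ω => sq_nonneg _
    have key : ∫ ω, (M * f ω - S) ^ 2 ∂ν
        = M ^ 2 * ∫ ω, f ω ^ 2 ∂ν - 2 * M * S * S + S ^ 2 * M := by
      have heq : (fun ω => (M * f ω - S) ^ 2)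
          = fun ω => M ^ 2 * f ω ^ 2 - 2 * M * S * f ω + S ^ 2 := by
        funext ω; ring
      have i1 : Integrable (fun ω => M ^ 2 * f ω ^ 2 - 2 * M * S * f ω) ν :=
        (hf2.const_mul _).sub (hf.const_mul _)
      rw [heq, integral_add i1 (integrable_const _),
        integral_sub (hf2.const_mul _) (hf.const_mul _), integral_const_mul, integral_const_mul,
        integral_const, smul_eq_mul, measureReal_def, ← hS, ← hM]
      ring
    nlinarith [hpos, key, hMpos]

set_option maxHeartbeats 2000000 in
theorem stmt_5 {Ω : Type*} [MeasurableSpace Ω] (μ : Measure Ω) [IsProbabilityMeasure μ]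
    (X : Ω → ℝ) (hXm : Measurable X)
    (hX4 : Integrable (fun ω => (X ω) ^ 4) μ)
    (m σ C₄ γ : ℝ) (hσ : 0 ≤ σ)
    (hmean : ∫ ω, X ω ∂μ = m)
    (hvar : ∫ ω, (X ω - m) ^ 2 ∂μ = σ ^ 2)
    (hfourth : ∫ ω, (X ω - m) ^ 4 ∂μ ≤ C₄ * σ ^ 4)
    (A : Set Ω) (hA : MeasurableSet A)
    (hPA : (μ A).toReal = 1 - γ) (hγ : 1 / 2 ≤ 1 - γ) :
    |(∫ ω, X ω ∂(μ[|A])) - m| ≤ σ * (8 * C₄ * γ ^ 3) ^ ((1 : ℝ) / 4) := by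
  have hXaesm : AEStronglyMeasurable X μ := hXm.aestronglyMeasurable
  set Y : Ω → ℝ := fun ω => X ω - m with hY
  have hYm : Measurable Y := hXm.sub measurable_const
  -- integrability
  have hX1 : Integrable X μ := by
    refine (hX4.add (integrable_const 1)).mono hXaesm ?_
    filter_upwards with ω
    have h1 : |X ω| ≤ X ω ^ 4 + 1 := by
      nlinarith [abs_nonneg (X ω), sq_abs (X ω), sq_nonneg (|X ω| - 1),
        sq_nonneg (|X ω| ^ 2 - 1), sq_nonneg (|X ω| ^ 2 - |X ω|)]
    have h2 : (0:ℝ) ≤ X ω ^ 4 + 1 := by positivity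
    simpa [Real.norm_eq_abs, abs_of_nonneg h2] using h1
  have hY1 : Integrable Y μ := hX1.sub (integrable_const m)
  have hY4 : Integrable (fun ω => Y ω ^ 4) μ := by
    refine ((hX4.const_mul 8).add (integrable_const (8 * m ^ 4))).mono
      ((hYm.pow_const 4).aestronglyMeasurable) ?_
    filter_upwards with ω
    have h1 : Y ω ^ 4 ≤ 8 * X ω ^ 4 + 8 * m ^ 4 := by
      simp only [hY]; nlinarith [sq_nonneg (X ω + m), sq_nonneg (X ω - m), sq_nonneg (X ω ^ 2 - m ^ 2)]
    have h0 : (0:ℝ) ≤ Y ω ^ 4 := by positivity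
    have h2 : (0:ℝ) ≤ 8 * X ω ^ 4 + 8 * m ^ 4 := le_trans h0 h1
    simp only [Pi.add_apply, Real.norm_eq_abs]
    rw [abs_of_nonneg h0, abs_of_nonneg h2]
    exact h1
  have hY2 : Integrable (fun ω => Y ω ^ 2) μ := by
    refine (hY4.add (integrable_const 1)).mono ((hYm.pow_const 2).aestronglyMeasurable) ?_
    filter_upwards with ω
    have h1 : Y ω ^ 2 ≤ Y ω ^ 4 + 1 := by nlinarith [sq_nonneg (Y ω ^ 2 - 1)]
    have h0 : (0:ℝ) ≤ Y ω ^ 2 := sq_nonneg _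
    have h2 : (0:ℝ) ≤ Y ω ^ 4 + 1 := by positivity
    simp only [Pi.add_apply, Real.norm_eq_abs]
    rw [abs_of_nonneg h0, abs_of_nonneg h2]
    exact h1
  -- measures
  set P := (μ A).toReal with hPdef
  have hPval : P = 1 - γ := hPA
  have hPhalf : (1:ℝ)/2 ≤ P := hPval ▸ hγ
  have hP0 : 0 < P := lt_of_lt_of_le (by norm_num) hPhalf
  have hAne : μ A ≠ ⊤ := measure_ne_top μ A
  have hQ : (μ Aᶜ).toReal = γ := by
    have h1 : μ Aᶜ = 1 - μ A := by
      rw [measure_compl hA hAne, measure_univ]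
    rw [h1, ENNReal.toReal_sub_of_le prob_le_one ENNReal.one_ne_top]
    rw [ENNReal.toReal_one, ← hPdef, hPval]; ring
  have hγ0 : 0 ≤ γ := hQ ▸ ENNReal.toReal_nonneg
  -- integrals
  set SA := ∫ ω in A, Y ω ∂μ with hSA
  set SC := ∫ ω in Aᶜ, Y ω ∂μ with hSC
  have hYint : ∫ ω, Y ω ∂μ = 0 := by
    simp only [hY]
    rw [integral_sub hX1 (integrable_const m), hmean, integral_const]
    simp
  have hsum : SA + SC = 0 := by
    rw [hSA, hSC, integral_add_compl hA hY1, hYint]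
  set a := ∫ ω in A, Y ω ^ 4 ∂μ with ha
  set b := ∫ ω in Aᶜ, Y ω ^ 4 ∂μ with hb
  have ha0 : 0 ≤ a := integral_nonneg fun ω => by positivity
  have hb0 : 0 ≤ b := integral_nonneg fun ω => by positivity
  have habsum : a + b ≤ C₄ * σ ^ 4 := by
    rw [ha, hb, integral_add_compl hA hY4]
    exact hfourth
  have hCσ : 0 ≤ C₄ * σ ^ 4 := le_trans (by linarith) habsum
  -- Cauchy-Schwarz twice on A and on Aᶜ
  have sq_to_four : (fun ω => (Y ω ^ 2) ^ 2) = fun ω => Y ω ^ 4 := by funext ω; ring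
  have CS : ∀ s : Set Ω, MeasurableSet s →
      (∫ ω in s, Y ω ∂μ) ^ 4 ≤ (μ s).toReal ^ 3 * ∫ ω in s, Y ω ^ 4 ∂μ := by
    intro s hs
    have hmass : (μ.restrict s) Set.univ = μ s := by
      simp [Measure.restrict_apply_univ]
    have h1 : (∫ ω in s, Y ω ∂μ) ^ 2 ≤ (μ s).toReal * ∫ ω in s, Y ω ^ 2 ∂μ := by
      have := cs_aux (μ.restrict s) hY1.restrict hY2.restrict
      rwa [hmass] at this
    have h2 : (∫ ω in s, Y ω ^ 2 ∂μ) ^ 2 ≤ (μ s).toReal * ∫ ω in s, Y ω ^ 4 ∂μ := by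
      have := cs_aux (μ.restrict s) hY2.restrict (by rw [sq_to_four]; exact hY4.restrict)
      rwa [hmass, sq_to_four] at this
    have hI2 : 0 ≤ ∫ ω in s, Y ω ^ 2 ∂μ := integral_nonneg fun ω => sq_nonneg _
    have hm0 : 0 ≤ (μ s).toReal := ENNReal.toReal_nonneg
    calc (∫ ω in s, Y ω ∂μ) ^ 4 = ((∫ ω in s, Y ω ∂μ) ^ 2) ^ 2 := by ring
      _ ≤ ((μ s).toReal * ∫ ω in s, Y ω ^ 2 ∂μ) ^ 2 :=
          pow_le_pow_left₀ (sq_nonneg _) h1 2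
      _ = (μ s).toReal ^ 2 * (∫ ω in s, Y ω ^ 2 ∂μ) ^ 2 := by ring
      _ ≤ (μ s).toReal ^ 2 * ((μ s).toReal * ∫ ω in s, Y ω ^ 4 ∂μ) :=
          mul_le_mul_of_nonneg_left h2 (by positivity)
      _ = (μ s).toReal ^ 3 * ∫ ω in s, Y ω ^ 4 ∂μ := by ring
  have hCSA : SA ^ 4 ≤ P ^ 3 * a := CS A hA
  have hCSC : SA ^ 4 ≤ γ ^ 3 * b := by
    have h1 : SC ^ 4 ≤ γ ^ 3 * b := by have := CS Aᶜ hA.compl; rwa [hQ] at this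
    have h2 : SA = -SC := by linarith
    rw [h2, show (-SC) ^ 4 = SC ^ 4 by ring]; exact h1
  -- key bound : SA^4 ≤ 8 * C₄ * γ^3 * σ^4 * P^4
  clear_value SA SC a b P
  have hcube : (1:ℝ)/4 ≤ γ ^ 3 + P ^ 3 := by
    rw [hPval]; nlinarith [sq_nonneg (γ - 1/2)]
  have hmix : SA ^ 4 * (γ ^ 3 + P ^ 3) ≤ γ ^ 3 * P ^ 3 * (C₄ * σ ^ 4) := by
    have e1 : γ ^ 3 * SA ^ 4 ≤ γ ^ 3 * (P ^ 3 * a) :=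
      mul_le_mul_of_nonneg_left hCSA (pow_nonneg hγ0 3)
    have e2 : P ^ 3 * SA ^ 4 ≤ P ^ 3 * (γ ^ 3 * b) :=
      mul_le_mul_of_nonneg_left hCSC (pow_nonneg hP0.le 3)
    have e3 : γ ^ 3 * P ^ 3 * (a + b) ≤ γ ^ 3 * P ^ 3 * (C₄ * σ ^ 4) :=
      mul_le_mul_of_nonneg_left habsum (mul_nonneg (pow_nonneg hγ0 3) (pow_nonneg hP0.le 3))
    nlinarith [e1, e2, e3]
  have hkey : SA ^ 4 ≤ 8 * C₄ * γ ^ 3 * σ ^ 4 * P ^ 4 := by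
    have hq1 : SA ^ 4 ≤ 4 * (γ ^ 3 * P ^ 3 * (C₄ * σ ^ 4)) := by
      have hSA4nn : 0 ≤ SA ^ 4 := by nlinarith [sq_nonneg (SA ^ 2)]
      have h5 : SA ^ 4 * (1 / 4) ≤ SA ^ 4 * (γ ^ 3 + P ^ 3) :=
        mul_le_mul_of_nonneg_left hcube hSA4nn
      linarith [h5, hmix]
    have hq2 : P ^ 3 ≤ 2 * P ^ 4 := by
      have h6 : P ^ 3 * (1 / 2) ≤ P ^ 3 * P :=
        mul_le_mul_of_nonneg_left hPhalf (pow_pos hP0 3).le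
      nlinarith [h6]
    have hnn : 0 ≤ γ ^ 3 * (C₄ * σ ^ 4) := mul_nonneg (pow_nonneg hγ0 3) hCσ
    linarith [mul_le_mul_of_nonneg_left hq2 hnn]
  -- compute conditional expectation
  have hd : (∫ ω, X ω ∂(μ[|A])) - m = SA / P := by
    have hXA : ∫ ω in A, X ω ∂μ = SA + m * P := by
      have : SA = (∫ ω in A, X ω ∂μ) - m * P := by
        rw [hSA]
        simp only [hY]
        rw [integral_sub hX1.restrict (integrable_const m), integral_const]
        simp [Measure.restrict_apply_univ, ← hPdef]
        show (μ A).toReal * m = m * P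
        rw [← hPdef]; ring
      linarith
    rw [ProbabilityTheory.cond, integral_smul_measure, ENNReal.toReal_inv, hXA, ← hPdef]
    field_simp
    have hPi : P * P⁻¹ = 1 := mul_inv_cancel₀ hP0.ne'
    linear_combination (SA + P * m) * hPi
  rw [hd]
  -- conclude
  rcases eq_or_lt_of_le hσ with hσ0 | hσpos
  · have hSA40 : SA ^ 4 ≤ 0 := by
      rw [← hσ0] at hkey
      simpa using hkey
    have hSA4 : SA ^ 4 = 0 := le_antisymm hSA40 (by nlinarith [sq_nonneg (SA ^ 2)])
    have : SA = 0 := by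
      have := pow_eq_zero_iff (n := 4) (by norm_num) |>.mp hSA4
      exact this
    rw [this, ← hσ0]
    simp
  · have hC0 : 0 ≤ C₄ := by
      have : (0:ℝ) < σ ^ 4 := by positivity
      nlinarith [hCσ]
    have hR0 : (0:ℝ) ≤ 8 * C₄ * γ ^ 3 := by positivity
    have hrhs0 : 0 ≤ σ * (8 * C₄ * γ ^ 3) ^ ((1:ℝ)/4) :=
      mul_nonneg hσ (Real.rpow_nonneg hR0 _)
    rw [← pow_le_pow_iff_left₀ (abs_nonneg _) hrhs0 (n := 4) (by norm_num)]
    have hrhs4 : (σ * (8 * C₄ * γ ^ 3) ^ ((1:ℝ)/4)) ^ 4 = σ ^ 4 * (8 * C₄ * γ ^ 3) := by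
      rw [mul_pow, ← Real.rpow_natCast ((8 * C₄ * γ ^ 3) ^ ((1:ℝ)/4)) 4,
        ← Real.rpow_mul hR0]
      norm_num
    rw [hrhs4, abs_div, abs_of_pos hP0, div_pow, div_le_iff₀ (pow_pos hP0 4)]
    have habs4 : |SA| ^ 4 = SA ^ 4 := by
      rw [← abs_pow]; exact abs_of_nonneg (by nlinarith [sq_nonneg (SA ^ 2)])
    calc |SA| ^ 4 = SA ^ 4 := habs4
      _ ≤ 8 * C₄ * γ ^ 3 * σ ^ 4 * P ^ 4 := hkey
      _ = σ ^ 4 * (8 * C₄ * γ ^ 3) * P ^ 4 := by ring
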